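/- Let h_1, …, h_t ∈ ℝ^d generate a dense additive subgroup of ℝ^d, let n_1, …, n_t be natural numbers, and let f : ℝ^d → ℝ be a continuous function satisfying Δ_{h_k}^{n_k+1} f(x) = 0 for all x ∈ ℝ^d and all k = 1, …, t. Then f is an ordinary polynomial of total degree at most N = n_1 + n_2 + ⋯ + n_t + t − 1. -/

import Mathlib

/-- The forward difference operator: `(Δ_h f)(x) = f(x + h) - f(x)`. -/
def fdiff {G M : Type*} [Add G] [Sub M] (h : G) (f : G → M) : G → M :=
  fun x => f (x + h) - f x

open Function Finset

section DiffCalc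
variable {M : Type*} {G : Type*} [AddCommGroup M] [AddCommGroup G]

lemma fwdDiff_zero_fun (a : M) : fwdDiff a (0 : M → G) = 0 := by
  funext x; simp [fwdDiff]

lemma fwdDiff_iter_zero_fun (a : M) (m : ℕ) : (fwdDiff a)^[m] (0 : M → G) = 0 := by
  induction m with
  | zero => rfl
  | succ m ih => rw [Function.iterate_succ_apply, fwdDiff_zero_fun, ih]

lemma fwdDiff_iter_mono {a : M} {f : M → G} {m m' : ℕ} (hm : m ≤ m')
    (H : (fwdDiff a)^[m] f = 0) : (fwdDiff a)^[m'] f = 0 := by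
  obtain ⟨k, rfl⟩ := Nat.exists_eq_add_of_le hm
  rw [add_comm, Function.iterate_add_apply, H, fwdDiff_iter_zero_fun]

lemma fwdDiff_comm (a b : M) (f : M → G) :
    fwdDiff a (fwdDiff b f) = fwdDiff b (fwdDiff a f) := by
  funext x
  simp only [fwdDiff]
  rw [add_right_comm]
  abel

lemma fwdDiff_iter_comm_one (a b : M) (f : M → G) (m : ℕ) :
    (fwdDiff a)^[m] (fwdDiff b f) = fwdDiff b ((fwdDiff a)^[m] f) := by
  induction m generalizing f with
  | zero => rfl
  | succ m ih =>
    rw [Function.iterate_succ_apply, fwdDiff_comm, ih, ← Function.iterate_succ_apply]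

lemma fwdDiff_shift (a c : M) (f : M → G) :
    fwdDiff a (fun x => f (x + c)) = fun x => fwdDiff a f (x + c) := by
  funext x; simp only [fwdDiff]; rw [add_right_comm]

lemma fwdDiff_iter_shift (a c : M) (f : M → G) (m : ℕ) :
    (fwdDiff a)^[m] (fun x => f (x + c)) = fun x => (fwdDiff a)^[m] f (x + c) := by
  induction m generalizing f with
  | zero => rfl
  | succ m ih =>
    rw [Function.iterate_succ_apply, fwdDiff_shift, ih]
    funext x
    rw [← Function.iterate_succ_apply]

lemma fwdDiff_add_split (a b : M) (f : M → G) :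
    fwdDiff (a + b) f = fwdDiff a (fun x => f (x + b)) + fwdDiff b f := by
  funext x
  simp only [fwdDiff, Pi.add_apply]
  rw [← add_assoc]
  abel

lemma fwdDiff_iter_add_kill (g h' : M) :
    ∀ (A : ℕ) (B : ℕ) (f : M → G), (fwdDiff g)^[A] f = 0 → (fwdDiff h')^[B] f = 0 →
      (fwdDiff (g + h'))^[A + B - 1] f = 0 := by
  intro A
  induction A with
  | zero =>
    intro B f hA hB
    simp only [Function.iterate_zero, id_eq] at hA
    rw [hA, fwdDiff_iter_zero_fun]
  | succ A ihA =>
    intro B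
    induction B with
    | zero =>
      intro f hA hB
      simp only [Function.iterate_zero, id_eq] at hB
      rw [hB, fwdDiff_iter_zero_fun]
    | succ B ihB =>
      intro f hA hB
      have hexp : A + 1 + (B + 1) - 1 = (A + B) + 1 := by omega
      rw [hexp, Function.iterate_succ_apply, fwdDiff_add_split, fwdDiff_iter_add]
      have h1 : (fwdDiff (g + h'))^[A + B] (fwdDiff g fun x => f (x + h')) = 0 := by
        have e1 : (fwdDiff g)^[A] (fwdDiff g fun x => f (x + h')) = 0 := by
          rw [← Function.iterate_succ_apply, fwdDiff_iter_shift, hA]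
          rfl
        have e2 : (fwdDiff h')^[B + 1] (fwdDiff g fun x => f (x + h')) = 0 := by
          rw [fwdDiff_iter_comm_one, fwdDiff_iter_shift, hB]
          funext x
          simp [fwdDiff]
        have := ihA (B + 1) _ e1 e2
        simpa using this
      have h2 : (fwdDiff (g + h'))^[A + B] (fwdDiff h' f) = 0 := by
        have e1 : (fwdDiff g)^[A + 1] (fwdDiff h' f) = 0 := by
          rw [fwdDiff_iter_comm_one, hA]
          funext x; simp [fwdDiff]
        have e2 : (fwdDiff h')^[B] (fwdDiff h' f) = 0 := by
          rw [← Function.iterate_succ_apply, hB]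
        have := ihB _ e1 e2
        simpa using this
      rw [h1, h2, add_zero]

end DiffCalc

open Function Finset fwdDiff_aux

section EndRing
variable {M : Type*} {G : Type*} [AddCommGroup M] [AddCommGroup G]

lemma shiftₗ_add_eq (a b : M) :
    shiftₗ M G (a + b) = shiftₗ M G a * shiftₗ M G b := by
  apply LinearMap.ext; intro f; funext y
  rw [Module.End.mul_apply, shiftₗ_apply, shiftₗ_apply, shiftₗ_apply, add_assoc]

lemma shiftₗ_zero_eq : shiftₗ M G (0 : M) = 1 := by
  apply LinearMap.ext; intro f; funext y
  rw [shiftₗ_apply, add_zero, Module.End.one_apply]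

lemma shiftₗ_nsmul_eq (a : M) (c : ℕ) :
    shiftₗ M G (c • a) = (shiftₗ M G a) ^ c := by
  induction c with
  | zero => rw [zero_smul, pow_zero, shiftₗ_zero_eq]
  | succ c ih => rw [succ_nsmul, shiftₗ_add_eq, ih, pow_succ]

lemma fwdDiffₗ_eq_shiftₗ_sub_one (a : M) :
    fwdDiffₗ M G a = shiftₗ M G a - 1 := by
  rw [shiftₗ, add_sub_cancel_right]

lemma fwdDiff_nsmul_kill (a : M) (c A : ℕ) (f : M → G)
    (H : (fwdDiff a)^[A] f = 0) : (fwdDiff (c • a))^[A] f = 0 := by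
  have key : fwdDiffₗ M G (c • a) =
      (∑ i ∈ range c, (shiftₗ M G a) ^ i) * fwdDiffₗ M G a := by
    rw [fwdDiffₗ_eq_shiftₗ_sub_one, fwdDiffₗ_eq_shiftₗ_sub_one, shiftₗ_nsmul_eq, geom_sum_mul]
  have hcomm : Commute (∑ i ∈ range c, (shiftₗ M G a) ^ i) (fwdDiffₗ M G a) := by
    rw [fwdDiffₗ_eq_shiftₗ_sub_one]
    exact Commute.sum_left _ _ _ fun i _ =>
      ((Commute.refl _).pow_left _).sub_right (Commute.one_right _)
  have : (fwdDiffₗ M G (c • a)) ^ A =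
      ((∑ i ∈ range c, (shiftₗ M G a) ^ i)) ^ A * (fwdDiffₗ M G a) ^ A := by
    rw [key, hcomm.mul_pow]
  calc (fwdDiff (c • a))^[A] f = ((fwdDiffₗ M G (c • a)) ^ A) f := by
        rw [coe_fwdDiffₗ_pow]
    _ = (((∑ i ∈ range c, (shiftₗ M G a) ^ i)) ^ A) (((fwdDiffₗ M G a) ^ A) f) := by
        rw [this, Module.End.mul_apply]
    _ = 0 := by
        have : ((fwdDiffₗ M G a) ^ A) f = 0 := by
          rw [show ((fwdDiffₗ M G a) ^ A) f = (fwdDiff a)^[A] f from congrFun (coe_fwdDiffₗ_pow a A) f, H]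
        rw [this, map_zero]

lemma fwdDiff_neg_kill (a : M) (A : ℕ) (f : M → G)
    (H : (fwdDiff a)^[A] f = 0) : (fwdDiff (-a))^[A] f = 0 := by
  have key : fwdDiffₗ M G (-a) = (-(shiftₗ M G (-a))) * fwdDiffₗ M G a := by
    rw [fwdDiffₗ_eq_shiftₗ_sub_one, fwdDiffₗ_eq_shiftₗ_sub_one, neg_mul, mul_sub, mul_one,
      ← shiftₗ_add_eq, neg_add_cancel, shiftₗ_zero_eq, neg_sub]
  have hcomm : Commute (-(shiftₗ M G (-a))) (fwdDiffₗ M G a) := by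
    rw [fwdDiffₗ_eq_shiftₗ_sub_one]
    refine Commute.neg_left ?_
    refine Commute.sub_right ?_ (Commute.one_right _)
    rw [Commute, SemiconjBy, ← shiftₗ_add_eq, ← shiftₗ_add_eq, add_comm]
  have hpow : (fwdDiffₗ M G (-a)) ^ A =
      (-(shiftₗ M G (-a))) ^ A * (fwdDiffₗ M G a) ^ A := by
    rw [key, hcomm.mul_pow]
  calc (fwdDiff (-a))^[A] f = ((fwdDiffₗ M G (-a)) ^ A) f := by rw [coe_fwdDiffₗ_pow]
    _ = ((-(shiftₗ M G (-a))) ^ A) (((fwdDiffₗ M G a) ^ A) f) := by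
        rw [hpow, Module.End.mul_apply]
    _ = 0 := by
        have : ((fwdDiffₗ M G a) ^ A) f = 0 := by
          rw [show ((fwdDiffₗ M G a) ^ A) f = (fwdDiff a)^[A] f from congrFun (coe_fwdDiffₗ_pow a A) f, H]
        rw [this, map_zero]

lemma fwdDiff_zsmul_kill (a : M) (c : ℤ) (A : ℕ) (f : M → G)
    (H : (fwdDiff a)^[A] f = 0) : (fwdDiff (c • a))^[A] f = 0 := by
  obtain ⟨m, rfl | rfl⟩ := c.eq_nat_or_neg
  · rw [natCast_zsmul]; exact fwdDiff_nsmul_kill a m A f H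
  · rw [neg_zsmul, natCast_zsmul]
    exact fwdDiff_neg_kill _ A f (fwdDiff_nsmul_kill a m A f H)

lemma fwdDiff_sum_kill {ι : Type*} (w : ι → M) (m : ι → ℕ) (f : M → G) (S : Finset ι)
    (hS : S.Nonempty) (H : ∀ k ∈ S, (fwdDiff (w k))^[m k + 1] f = 0) :
    (fwdDiff (∑ k ∈ S, w k))^[∑ k ∈ S, (m k + 1)] f = 0 := by
  classical
  revert H
  induction hS using Finset.Nonempty.cons_induction with
  | singleton a => intro H; simpa using H a (by simp)
  | cons a s ha hs ih =>
    intro H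
    rw [Finset.sum_cons, Finset.sum_cons]
    have h1 := H a (Finset.mem_cons_self a s)
    have h2 := ih fun k hk => H k (Finset.mem_cons_of_mem hk)
    have h3 := fwdDiff_iter_add_kill (w a) (∑ k ∈ s, w k) (m a + 1)
      (∑ k ∈ s, (m k + 1)) f h1 h2
    exact fwdDiff_iter_mono (by omega) h3

end EndRing

lemma continuous_fwdDiff_iter {M : Type*} [AddCommGroup M] [TopologicalSpace M]
    [ContinuousAdd M] (f : M → ℝ) (hf : Continuous f) (m : ℕ) :
    Continuous (fun p : M × M => (fwdDiff p.1)^[m] f p.2) := by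
  induction m with
  | zero => exact hf.comp continuous_snd
  | succ m ih =>
    have hh : (fun p : M × M => (fwdDiff p.1)^[m + 1] f p.2)
        = fun p : M × M => (fwdDiff p.1)^[m] f (p.2 + p.1) - (fwdDiff p.1)^[m] f p.2 := by
      funext p
      rw [Function.iterate_succ_apply']
      rfl
    rw [hh]
    exact (ih.comp (continuous_fst.prodMk (continuous_snd.add continuous_fst))).sub ih
section OneDim

open Polynomial

lemma fwdDiff_iter_pt_zero {N : ℕ} (g : ℝ → ℝ)
    (hD : ∀ u x, (fwdDiff u)^[N + 1] g x = 0) (u : ℝ) {j : ℕ} (hj : N + 1 ≤ j) (x : ℝ) :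
    (fwdDiff u)^[j] g x = 0 := by
  have h0 : (fwdDiff u)^[N + 1] g = 0 := funext (hD u)
  have := fwdDiff_iter_mono hj h0
  rw [this]; rfl

lemma newton_trunc {N : ℕ} (g : ℝ → ℝ)
    (hD : ∀ u x, (fwdDiff u)^[N + 1] g x = 0) (u x₀ : ℝ) (k : ℕ) :
    g (x₀ + k * u) = ∑ j ∈ Finset.range (N + 1), (k.choose j : ℝ) * (fwdDiff u)^[j] g x₀ := by
  have h1 := shift_eq_sum_fwdDiff_iter u g k x₀
  rw [nsmul_eq_mul] at h1
  have hKk : Finset.range (k + 1) ⊆ Finset.range (max k N + 1) := by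
    intro j hj; simp only [Finset.mem_range] at *; omega
  have hKN : Finset.range (N + 1) ⊆ Finset.range (max k N + 1) := by
    intro j hj; simp only [Finset.mem_range] at *; omega
  calc g (x₀ + k * u)
      = ∑ j ∈ Finset.range (k + 1), k.choose j • (fwdDiff u)^[j] g x₀ := h1
    _ = ∑ j ∈ Finset.range (max k N + 1), k.choose j • (fwdDiff u)^[j] g x₀ := by
        refine Finset.sum_subset hKk fun j hj hj' => ?_
        have : k < j := by simp only [Finset.mem_range] at hj'; omega
        rw [Nat.choose_eq_zero_of_lt this, zero_smul]
    _ = ∑ j ∈ Finset.range (max k N + 1), (k.choose j : ℝ) * (fwdDiff u)^[j] g x₀ := by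
        refine Finset.sum_congr rfl fun j _ => ?_
        rw [nsmul_eq_mul]
    _ = ∑ j ∈ Finset.range (N + 1), (k.choose j : ℝ) * (fwdDiff u)^[j] g x₀ := by
        refine (Finset.sum_subset hKN fun j hj hj' => ?_).symm
        have : N + 1 ≤ j := by simp only [Finset.mem_range] at hj'; omega
        rw [fwdDiff_iter_pt_zero g hD u this, mul_zero]

lemma grid_poly {N : ℕ} (g : ℝ → ℝ)
    (hD : ∀ u x, (fwdDiff u)^[N + 1] g x = 0) (u : ℝ) (hu : u ≠ 0) (x₀ : ℝ) :
    ∃ q : Polynomial ℝ, q.natDegree ≤ N ∧ ∀ k : ℕ, g (x₀ + k * u) = q.eval (x₀ + k * u) := by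
  refine ⟨∑ j ∈ Finset.range (N + 1),
      C ((fwdDiff u)^[j] g x₀ * (j.factorial : ℝ)⁻¹) *
        (descPochhammer ℝ j).comp (C u⁻¹ * (X - C x₀)), ?_, ?_⟩
  · refine Polynomial.natDegree_sum_le_of_forall_le _ _ fun j hj => ?_
    refine le_trans (natDegree_mul_le) ?_
    rw [natDegree_C, zero_add]
    refine le_trans (natDegree_comp_le) ?_
    have h2 : natDegree (C u⁻¹ * (X - C x₀)) ≤ 1 :=
      le_trans natDegree_mul_le (by simp [natDegree_X_sub_C])
    calc (descPochhammer ℝ j).natDegree * (C u⁻¹ * (X - C x₀)).natDegree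
        ≤ (descPochhammer ℝ j).natDegree * 1 := Nat.mul_le_mul_left _ h2
      _ = j := by rw [mul_one, descPochhammer_natDegree]
      _ ≤ N := by simp only [Finset.mem_range] at hj; omega
  · intro k
    rw [newton_trunc g hD u x₀ k, eval_finset_sum]
    refine Finset.sum_congr rfl fun j hj => ?_
    rw [eval_mul, eval_C, eval_comp]
    have he : Polynomial.eval (x₀ + k * u) (C u⁻¹ * (X - C x₀)) = (k : ℝ) := by
      rw [eval_mul, eval_C, eval_sub, eval_X, eval_C]
      field_simp
      ring
    rw [he, descPochhammer_eval_eq_descFactorial ℝ k j,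
      Nat.descFactorial_eq_factorial_mul_choose]
    have hfac : (j.factorial : ℝ) ≠ 0 := Nat.cast_ne_zero.mpr j.factorial_ne_zero
    push_cast
    field_simp

lemma one_dim {N : ℕ} (g : ℝ → ℝ) (hg : Continuous g)
    (hD : ∀ u x, (fwdDiff u)^[N + 1] g x = 0) :
    ∃ p : Polynomial ℝ, p.natDegree ≤ N ∧ ∀ x, g x = p.eval x := by
  obtain ⟨p, hpdeg, hp⟩ := grid_poly g hD 1 one_ne_zero 0
  refine ⟨p, hpdeg, ?_⟩
  have hnodes : ∀ j : ℕ, g j = p.eval (j : ℝ) := by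
    intro j
    have := hp j
    simpa using this
  have hdegbound : ∀ q : Polynomial ℝ, q.natDegree ≤ N →
      q.degree < ((Finset.range (N + 1)).image (Nat.cast : ℕ → ℝ)).card := by
    intro q hq
    have hcard : ((Finset.range (N + 1)).image (Nat.cast : ℕ → ℝ)).card = N + 1 := by
      rw [Finset.card_image_of_injective _ Nat.cast_injective, Finset.card_range]
    rw [hcard]
    calc q.degree ≤ (q.natDegree : WithBot ℕ) := degree_le_natDegree
      _ < ((N + 1 : ℕ) : WithBot ℕ) := by
          exact_mod_cast Nat.lt_succ_of_le hq
  have key : ∀ r : ℚ, g r = p.eval (r : ℝ) := by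
    intro r
    have hbne : ((r.den : ℝ)) ≠ 0 := Nat.cast_ne_zero.mpr r.den_nz
    obtain ⟨q, hqdeg, hq⟩ := grid_poly g hD ((r.den : ℝ))⁻¹ (inv_ne_zero hbne)
      (-(r.num.natAbs : ℝ) / r.den)
    have hnodes' : ∀ j : ℕ, j ≤ N → q.eval (j : ℝ) = g j := by
      intro j hj
      have hk : -(r.num.natAbs : ℝ) / r.den + ((r.num.natAbs + j * r.den : ℕ) : ℝ) * ((r.den : ℝ))⁻¹
          = (j : ℝ) := by
        push_cast
        field_simp
        ring
      have := hq (r.num.natAbs + j * r.den)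
      rw [hk] at this
      exact this.symm
    have hqp : q = p := by
      refine Polynomial.eq_of_degrees_lt_of_eval_finset_eq _ (hdegbound q hqdeg)
        (hdegbound p hpdeg) ?_
      intro x hx
      simp only [Finset.mem_image, Finset.mem_range] at hx
      obtain ⟨j, hj, rfl⟩ := hx
      rw [hnodes' j (by omega), hnodes j]
    have hnum : (0 : ℤ) ≤ r.num + r.num.natAbs := by omega
    have hr : -(r.num.natAbs : ℝ) / r.den + (((r.num + r.num.natAbs).toNat : ℕ) : ℝ) * ((r.den : ℝ))⁻¹
        = (r : ℝ) := by
      have h1 : (((r.num + r.num.natAbs).toNat : ℕ) : ℝ) = (r.num : ℝ) + r.num.natAbs := by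
        rw [← Int.cast_natCast, Int.toNat_of_nonneg hnum, Int.cast_add, Int.cast_natCast]
      rw [h1, Rat.cast_def]
      field_simp
      ring
    have := hq ((r.num + r.num.natAbs).toNat)
    rw [hr] at this
    rw [this, hqp]
  have hfin : g = fun x => p.eval x := by
    refine Continuous.ext_on (Rat.denseRange_cast (𝕜 := ℝ)) hg (Polynomial.continuous p) ?_
    rintro x ⟨r, rfl⟩
    exact key r
  exact fun x => congrFun hfin x

end OneDim
section Multi

open Finset

lemma fwdDiff_iter_comp {M M' G : Type*} [AddCommMonoid M] [AddCommMonoid M'] [AddCommGroup G]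
    (T : M → M') (a : M) (a' : M') (hT : ∀ x, T (x + a) = T x + a') (f : M' → G) (m : ℕ) :
    (fwdDiff a)^[m] (fun x => f (T x)) = fun x => ((fwdDiff a')^[m] f) (T x) := by
  induction m generalizing f with
  | zero => rfl
  | succ m ih =>
    rw [Function.iterate_succ_apply, Function.iterate_succ_apply]
    have h1 : fwdDiff a (fun x => f (T x)) = fun x => (fwdDiff a' f) (T x) := by
      funext x
      simp only [fwdDiff]
      rw [hT]
    rw [h1, ih]

lemma eval_aeval_X {σ : Type*} (y : σ → ℝ) (i : σ) (b : Polynomial ℝ) :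
    MvPolynomial.eval y (Polynomial.aeval (MvPolynomial.X i : MvPolynomial σ ℝ) b)
      = Polynomial.eval (y i) b := by
  induction b using Polynomial.induction_on with
  | C a => simp
  | add p q hp hq => simp [hp, hq]
  | monomial n a ih => simp [pow_succ, ← mul_assoc] at ih ⊢

lemma multi_exists (N : ℕ) : ∀ (d : ℕ) (f : (Fin d → ℝ) → ℝ), Continuous f →
    (∀ s x : Fin d → ℝ, (fwdDiff s)^[N + 1] f x = 0) →
    ∃ P : MvPolynomial (Fin d) ℝ, ∀ x, f x = MvPolynomial.eval x P := by
  intro d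
  induction d with
  | zero =>
    intro f _ _
    refine ⟨MvPolynomial.C (f 0), fun x => ?_⟩
    rw [MvPolynomial.eval_C, Subsingleton.elim x 0]
  | succ d ih =>
    intro f hf hD
    have hcons_add : ∀ (c : ℝ) (z s' : Fin d → ℝ),
        Fin.cons c (z + s') = (Fin.cons c z + Fin.cons 0 s' : Fin (d+1) → ℝ) := by
      intro c z s'
      funext i
      refine Fin.cases ?_ ?_ i <;> simp
    have hcons_add2 : ∀ (z : Fin d → ℝ) (c u : ℝ),
        Fin.cons (c + u) z = (Fin.cons c z + Fin.cons u (0 : Fin d → ℝ) : Fin (d+1) → ℝ) := by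
      intro z c u
      funext i
      refine Fin.cases ?_ ?_ i <;> simp
    set g : ℕ → (Fin d → ℝ) → ℝ := fun k z => f (Fin.cons (k : ℝ) z) with hg
    have hcont_cons : ∀ c : ℝ, Continuous fun z : Fin d → ℝ => (Fin.cons c z : Fin (d+1) → ℝ) := by
      intro c
      refine continuous_pi fun i => ?_
      refine Fin.cases ?_ ?_ i
      · simpa using continuous_const
      · intro j; simpa using continuous_apply j
    have hgcont : ∀ k : ℕ, Continuous (g k) := fun k => hf.comp (hcont_cons _)
    have hgD : ∀ (k : ℕ) (s' z : Fin d → ℝ), (fwdDiff s')^[N + 1] (g k) z = 0 := by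
      intro k s' z
      have h1 := fwdDiff_iter_comp (fun z : Fin d → ℝ => (Fin.cons (k : ℝ) z : Fin (d+1) → ℝ))
        s' (Fin.cons 0 s') (fun x => hcons_add (k : ℝ) x s') f (N + 1)
      have h2 := congrFun h1 z
      simp only [hg]
      rw [h2]
      exact hD _ _
    choose P hP using fun k => ih (g k) (hgcont k) (hgD k)
    have hline : ∀ (t : ℝ) (z : Fin d → ℝ),
        f (Fin.cons t z) = ∑ k ∈ range (N + 1),
          Polynomial.eval t (Lagrange.basis (range (N + 1)) (Nat.cast : ℕ → ℝ) k) * g k z := by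
      intro t z
      have hcont1 : Continuous fun t : ℝ => f (Fin.cons t z) := by
        refine hf.comp (continuous_pi fun i => ?_)
        refine Fin.cases ?_ ?_ i
        · simpa using continuous_id'
        · intro j; simpa using continuous_const
      have hD1 : ∀ u x : ℝ, (fwdDiff u)^[N + 1] (fun t => f (Fin.cons t z)) x = 0 := by
        intro u x
        have h1 := fwdDiff_iter_comp (fun t : ℝ => (Fin.cons t z : Fin (d+1) → ℝ))
          u (Fin.cons u (0 : Fin d → ℝ)) (fun x => hcons_add2 z x u) f (N + 1)
        rw [congrFun h1 x]
        exact hD _ _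
      obtain ⟨p, hpdeg, hp⟩ := one_dim _ hcont1 hD1
      have hinj : Set.InjOn (Nat.cast : ℕ → ℝ) (range (N + 1)) :=
        Nat.cast_injective.injOn
      have hdeg : p.degree < (#(range (N + 1)) : ℕ) := by
        rw [Finset.card_range]
        calc p.degree ≤ (p.natDegree : WithBot ℕ) := Polynomial.degree_le_natDegree
          _ < ((N + 1 : ℕ) : WithBot ℕ) := by exact_mod_cast Nat.lt_succ_of_le hpdeg
      have hinterp := Lagrange.eq_interpolate hinj hdeg
      rw [hp t, hinterp, Lagrange.interpolate_apply, Polynomial.eval_finset_sum]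
      refine Finset.sum_congr rfl fun k hk => ?_
      rw [Polynomial.eval_mul, Polynomial.eval_C, mul_comm]
      congr 1
      exact (hp _).symm
    refine ⟨∑ k ∈ range (N + 1),
      Polynomial.aeval (MvPolynomial.X 0 : MvPolynomial (Fin (d+1)) ℝ)
        (Lagrange.basis (range (N + 1)) (Nat.cast : ℕ → ℝ) k) *
        MvPolynomial.rename Fin.succ (P k), fun y => ?_⟩
    rw [map_sum]
    have hy : f y = f (Fin.cons (y 0) (fun j => y j.succ)) := by
      congr 1
      exact (Fin.cons_self_tail y).symm
    rw [hy, hline]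
    refine Finset.sum_congr rfl fun k hk => ?_
    rw [map_mul, MvPolynomial.eval_rename, eval_aeval_X]
    congr 1
    exact hP k (y ∘ Fin.succ)

end Multi
section DegreeReduce

open Finset

lemma isHomog_eval_smul {σ : Type*} [Fintype σ] (p : MvPolynomial σ ℝ) {n : ℕ}
    (hp : p.IsHomogeneous n) (t : ℝ) (v : σ → ℝ) :
    MvPolynomial.eval (t • v) p = t ^ n * MvPolynomial.eval v p := by
  rw [MvPolynomial.eval_eq', MvPolynomial.eval_eq', Finset.mul_sum]
  refine Finset.sum_congr rfl fun m hm => ?_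
  have hc : MvPolynomial.coeff m p ≠ 0 := MvPolynomial.mem_support_iff.mp hm
  have hdeg : m.degree = n := by
    by_contra hne
    exact hc (hp.coeff_eq_zero hne)
  have hsum : ∑ i, m i = n := by
    rw [← hdeg, Finsupp.degree]
    exact (Finset.sum_subset (Finset.subset_univ _) fun i _ hi =>
      Finsupp.notMem_support_iff.mp hi).symm
  have hprod : ∏ i, (t • v) i ^ m i = t ^ n * ∏ i, v i ^ m i := by
    calc ∏ i, (t • v) i ^ m i = ∏ i, (t ^ m i * v i ^ m i) := by
          refine Finset.prod_congr rfl fun i _ => ?_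
          rw [Pi.smul_apply, smul_eq_mul, mul_pow]
      _ = (∏ i, t ^ m i) * ∏ i, v i ^ m i := Finset.prod_mul_distrib
      _ = t ^ n * ∏ i, v i ^ m i := by rw [Finset.prod_pow_eq_pow_sum, hsum]
  rw [hprod]
  ring

lemma degree_reduce {d N : ℕ} (f : (Fin d → ℝ) → ℝ) (hf : Continuous f)
    (hD : ∀ s x : Fin d → ℝ, (fwdDiff s)^[N + 1] f x = 0)
    (P : MvPolynomial (Fin d) ℝ) (hP : ∀ x, f x = MvPolynomial.eval x P) :
    P.totalDegree ≤ N := by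
  have hcomp : ∀ D : ℕ, N < D → MvPolynomial.homogeneousComponent D P = 0 := by
    intro D hND
    rcases le_or_gt D P.totalDegree with hDle | hDgt
    · apply MvPolynomial.funext
      intro v
      rw [map_zero]
      -- line through 0 with direction v
      have hcont1 : Continuous fun t : ℝ => f (t • v) :=
        hf.comp (continuous_id.smul continuous_const)
      have hD1 : ∀ u x : ℝ, (fwdDiff u)^[N + 1] (fun t => f (t • v)) x = 0 := by
        intro u x
        have h1 := fwdDiff_iter_comp (fun t : ℝ => t • v) u (u • v)
          (fun x => add_smul x u v) f (N + 1)
        rw [congrFun h1 x]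
        exact hD _ _
      obtain ⟨p, hpdeg, hp⟩ := one_dim _ hcont1 hD1
      set A : Polynomial ℝ := ∑ DD ∈ range (P.totalDegree + 1),
        Polynomial.C (MvPolynomial.eval v (MvPolynomial.homogeneousComponent DD P)) *
          Polynomial.X ^ DD with hA
      have hAeval : ∀ t : ℝ, Polynomial.eval t A = MvPolynomial.eval (t • v) P := by
        intro t
        conv_rhs => rw [← MvPolynomial.sum_homogeneousComponent P]
        rw [map_sum, hA, Polynomial.eval_finset_sum]
        refine Finset.sum_congr rfl fun DD _ => ?_
        rw [Polynomial.eval_mul, Polynomial.eval_C, Polynomial.eval_pow, Polynomial.eval_X,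
          isHomog_eval_smul _ (MvPolynomial.homogeneousComponent_isHomogeneous DD P) t v]
        ring
      have hAp : A = p := by
        apply Polynomial.funext
        intro t
        rw [hAeval t, ← hP, hp]
      have hcoeff : Polynomial.coeff A D =
          MvPolynomial.eval v (MvPolynomial.homogeneousComponent D P) := by
        rw [hA, Polynomial.finset_sum_coeff]
        rw [Finset.sum_eq_single D]
        · rw [Polynomial.coeff_C_mul, Polynomial.coeff_X_pow, if_pos rfl, mul_one]
        · intro b _ hb
          rw [Polynomial.coeff_C_mul, Polynomial.coeff_X_pow, if_neg (Ne.symm hb), mul_zero]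
        · intro hD2
          exact absurd (Finset.mem_range.mpr (by omega)) hD2
      rw [← hcoeff, hAp]
      exact Polynomial.coeff_eq_zero_of_natDegree_lt (lt_of_le_of_lt hpdeg hND)
    · exact MvPolynomial.homogeneousComponent_eq_zero _ _ hDgt
  rw [MvPolynomial.totalDegree]
  refine Finset.sup_le fun m hm => ?_
  by_contra hN
  push_neg at hN
  have h0 := hcomp _ hN
  have h1 : MvPolynomial.coeff m (MvPolynomial.homogeneousComponent
      (m.sum fun _ e => e) P) = MvPolynomial.coeff m P := by
    rw [MvPolynomial.coeff_homogeneousComponent, if_pos]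
    rfl
  rw [h0] at h1
  simp only [MvPolynomial.coeff_zero] at h1
  exact (MvPolynomial.mem_support_iff.mp hm) h1.symm

end DegreeReduce
theorem montel_with_degree_bound {d t : ℕ} (h : Fin t → (Fin d → ℝ))
    (hdense : Dense ((AddSubgroup.closure (Set.range h) : AddSubgroup (Fin d → ℝ)) :
      Set (Fin d → ℝ)))
    (n : Fin t → ℕ) (f : (Fin d → ℝ) → ℝ) (hf : Continuous f)
    (hdiff : ∀ k : Fin t, ∀ x, (fdiff (h k))^[n k + 1] f x = 0) :
    ∃ P : MvPolynomial (Fin d) ℝ,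
      P.totalDegree ≤ (∑ i, n i) + t - 1 ∧ ∀ x, f x = MvPolynomial.eval x P := by
  classical
  rcases Nat.eq_zero_or_pos t with rfl | ht
  · -- t = 0 : the dense subgroup is trivial, so the space is a single point
    have hempty : Set.range h = ∅ := Set.range_eq_empty h
    rw [hempty, AddSubgroup.closure_empty] at hdense
    have hsub : ∀ x : Fin d → ℝ, x = 0 := by
      intro x
      have hx : x ∈ closure (((⊥ : AddSubgroup (Fin d → ℝ)) : Set (Fin d → ℝ))) := hdense x
      rw [AddSubgroup.coe_bot] at hx
      rw [IsClosed.closure_eq isClosed_singleton] at hx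
      simpa using hx
    refine ⟨MvPolynomial.C (f 0), ?_, fun x => ?_⟩
    · simp [MvPolynomial.totalDegree_C]
    · rw [MvPolynomial.eval_C, hsub x]
  · set N : ℕ := (∑ i, n i) + t - 1 with hN
    have hN1 : N + 1 = ∑ i : Fin t, (n i + 1) := by
      have hsum : ∑ i : Fin t, (n i + 1) = (∑ i, n i) + t := by
        rw [Finset.sum_add_distrib]
        simp
      omega
    have hdiff' : ∀ k : Fin t, (fwdDiff (h k))^[n k + 1] f = 0 :=
      fun k => funext (hdiff k)
    -- Step 1: the difference property holds for all elements of the subgroup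
    have hclosure : ∀ s ∈ (AddSubgroup.closure (Set.range h) : AddSubgroup (Fin d → ℝ)),
        (fwdDiff s)^[N + 1] f = 0 := by
      intro s hs
      have hle : (AddSubgroup.closure (Set.range h) : AddSubgroup (Fin d → ℝ)) ≤
          (Submodule.span ℤ (Set.range h)).toAddSubgroup := by
        rw [AddSubgroup.closure_le]
        exact Submodule.subset_span
      have hmem : s ∈ Submodule.span ℤ (Set.range h) := hle hs
      obtain ⟨c, rfl⟩ := (Submodule.mem_span_range_iff_exists_fun ℤ).mp hmem
      have hnonempty : (Finset.univ : Finset (Fin t)).Nonempty :=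
        ⟨⟨0, ht⟩, Finset.mem_univ _⟩
      have hkill := fwdDiff_sum_kill (fun k => c k • h k) n f Finset.univ hnonempty
        (fun k _ => fwdDiff_zsmul_kill (h k) (c k) (n k + 1) f (hdiff' k))
      rwa [hN1]
    -- Step 2: by density and continuity, it holds for all s
    have hall : ∀ s x : Fin d → ℝ, (fwdDiff s)^[N + 1] f x = 0 := by
      intro s x
      have hcont : Continuous fun s' : Fin d → ℝ => (fwdDiff s')^[N + 1] f x :=
        (continuous_fwdDiff_iter f hf (N + 1)).comp (continuous_id.prodMk continuous_const)
      have hcl : IsClosed {s' : Fin d → ℝ | (fwdDiff s')^[N + 1] f x = 0} :=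
        isClosed_eq hcont continuous_const
      have hsub2 : ((AddSubgroup.closure (Set.range h) : AddSubgroup (Fin d → ℝ)) :
          Set (Fin d → ℝ)) ⊆ {s' | (fwdDiff s')^[N + 1] f x = 0} :=
        fun s' hs' => congrFun (hclosure s' hs') x
      have hclsub := hcl.closure_subset_iff.mpr hsub2
      exact hclsub (by rw [hdense.closure_eq]; trivial)
    obtain ⟨P, hP⟩ := multi_exists N d f hf hall
    exact ⟨P, degree_reduce f hf hall P hP, hP⟩
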